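/- Let d ≥ 1 and let Δ^{d-1} = {θ ∈ [0,∞)^d : θ_1 + ... + θ_d = 1} be the standard simplex. There exists a constant C_d > 0, depending only on d, such that for every probability (Radon) measure λ on Δ^{d-1} and every pair of parameters ε, δ ∈ (0,1), at least one of the following holds: (i) there exists a Borel set A ⊂ Δ^{d-1} with diam(A) ≤ ε and λ(A) > 1 − δ; or (ii) ∫_{Δ^{d-1}} ∫_{Δ^{d-1}} ‖θ − σ‖² λ(dθ) λ(dσ) ≥ C_d δ ε^{d+1}, where ‖·‖ is the Euclidean norm. -/

import Mathlib

open MeasureTheory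

theorem stmt0 (d : ℕ) (hd : 1 ≤ d) :
    ∃ C : ℝ, 0 < C ∧
      ∀ (μ : Measure (EuclideanSpace ℝ (Fin d))), IsProbabilityMeasure μ →
        μ {θ | (∀ i, 0 ≤ θ i) ∧ ∑ i, θ i = 1}ᶜ = 0 →
        ∀ ε δ : ℝ, ε ∈ Set.Ioo (0:ℝ) 1 → δ ∈ Set.Ioo (0:ℝ) 1 →
          (∃ A : Set (EuclideanSpace ℝ (Fin d)), MeasurableSet A ∧
              A ⊆ {θ | (∀ i, 0 ≤ θ i) ∧ ∑ i, θ i = 1} ∧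
              Metric.diam A ≤ ε ∧ (1 - δ : ℝ) < (μ A).toReal) ∨
          C * δ * ε ^ (d + 1) ≤ ∫ θ, ∫ σ, ‖θ - σ‖ ^ 2 ∂μ ∂μ := by
  classical
  refine ⟨1/4, by norm_num, ?_⟩
  intro μ hμ hS ε δ hε hδ
  obtain ⟨hε0, hε1⟩ := hε
  obtain ⟨hδ0, hδ1⟩ := hδ
  set S : Set (EuclideanSpace ℝ (Fin d)) := {θ | (∀ i, 0 ≤ θ i) ∧ ∑ i, θ i = 1} with hSdef
  have hSclosed : IsClosed S := by
    have h1 : IsClosed {θ : EuclideanSpace ℝ (Fin d) | ∀ i, 0 ≤ θ i} := by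
      have he : {θ : EuclideanSpace ℝ (Fin d) | ∀ i, 0 ≤ θ i} = ⋂ i, {θ | 0 ≤ θ i} := by
        ext θ; simp
      rw [he]
      exact isClosed_iInter fun i =>
        isClosed_le continuous_const (EuclideanSpace.proj i).continuous
    have h2 : IsClosed {θ : EuclideanSpace ℝ (Fin d) | ∑ i, θ i = 1} :=
      isClosed_eq (continuous_finset_sum _ fun i _ => (EuclideanSpace.proj i).continuous)
        continuous_const
    exact h1.inter h2
  have hSmeas : MeasurableSet S := hSclosed.measurableSet
  have hμS : μ S = 1 := by
    have h1 := measure_add_measure_compl (μ := μ) hSmeas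
    rw [hS, add_zero, measure_univ] at h1
    exact h1
  -- norm bound on S
  have hnorm : ∀ σ ∈ S, ‖σ‖ ≤ 1 := by
    intro σ hσ
    obtain ⟨hpos, hsum⟩ := hσ
    rw [EuclideanSpace.norm_eq]
    have : ∑ i, ‖σ i‖ ^ 2 ≤ 1 := by
      calc ∑ i, ‖σ i‖ ^ 2 ≤ ∑ i, σ i := by
            apply Finset.sum_le_sum
            intro i _
            rw [Real.norm_eq_abs, abs_of_nonneg (hpos i), sq]
            have h1 : σ i ≤ 1 := by
              have := Finset.single_le_sum (f := fun i => σ i) (fun j _ => hpos j) (Finset.mem_univ i)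
              linarith [hsum ▸ this]
            nlinarith [hpos i]
        _ = 1 := hsum
    calc √(∑ i, ‖σ i‖ ^ 2) ≤ √1 := Real.sqrt_le_sqrt this
      _ = 1 := Real.sqrt_one
  have haeS : ∀ᵐ σ ∂μ, σ ∈ S := by
    rw [ae_iff]
    exact hS
  -- integrability of inner
  have hint : ∀ θ : EuclideanSpace ℝ (Fin d), Integrable (fun σ => ‖θ - σ‖ ^ 2) μ := by
    intro θ
    apply Integrable.mono' (integrable_const ((‖θ‖ + 1) ^ 2))
    · exact (Continuous.stronglyMeasurable
        (((continuous_const.sub continuous_id).norm).pow 2)).aestronglyMeasurable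
    · filter_upwards [haeS] with σ hσ
      have h1 : ‖θ - σ‖ ≤ ‖θ‖ + 1 := by
        calc ‖θ - σ‖ ≤ ‖θ‖ + ‖σ‖ := norm_sub_le θ σ
          _ ≤ ‖θ‖ + 1 := by linarith [hnorm σ hσ]
      rw [Real.norm_eq_abs, abs_of_nonneg (by positivity)]
      exact pow_le_pow_left₀ (norm_nonneg _) h1 2
  by_cases h : ∃ θ₀, (1 - δ : ℝ) < (μ (Metric.closedBall θ₀ (ε/2) ∩ S)).toReal
  · obtain ⟨θ₀, hθ₀⟩ := h
    left
    refine ⟨Metric.closedBall θ₀ (ε/2) ∩ S, measurableSet_closedBall.inter hSmeas,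
      Set.inter_subset_right, ?_, hθ₀⟩
    calc Metric.diam _ ≤ Metric.diam (Metric.closedBall θ₀ (ε/2)) :=
          Metric.diam_mono Set.inter_subset_left Metric.isBounded_closedBall
      _ ≤ 2 * (ε/2) := Metric.diam_closedBall (by linarith)
      _ = ε := by ring
  · right
    push_neg at h
    set c : ℝ := δ * (ε/2)^2 with hc
    -- inner bound for every θ
    have hinner : ∀ θ : EuclideanSpace ℝ (Fin d), c ≤ ∫ σ, ‖θ - σ‖ ^ 2 ∂μ := by
      intro θ
      set T : Set (EuclideanSpace ℝ (Fin d)) := (Metric.closedBall θ (ε/2))ᶜ ∩ S with hT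
      have hTmeas : MeasurableSet T := measurableSet_closedBall.compl.inter hSmeas
      have hμT : δ ≤ (μ T).toReal := by
        have hsplit : μ (Metric.closedBall θ (ε/2) ∩ S) + μ T = μ S := by
          rw [← measure_inter_add_diff S measurableSet_closedBall]
          congr 1
          · rw [Set.inter_comm]
          · rw [Set.diff_eq, Set.inter_comm]
        have hfin1 : μ (Metric.closedBall θ (ε/2) ∩ S) ≠ ⊤ := measure_ne_top μ _
        have hfin2 : μ T ≠ ⊤ := measure_ne_top μ _
        have h1 := h θ
        have : (μ (Metric.closedBall θ (ε/2) ∩ S)).toReal + (μ T).toReal = 1 := by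
          rw [← ENNReal.toReal_add hfin1 hfin2, hsplit, hμS]
          simp
        linarith
      have hlow : ∀ σ ∈ T, (ε/2)^2 ≤ ‖θ - σ‖ ^ 2 := by
        intro σ hσ
        have : ε/2 < dist σ θ := by
          simpa [Metric.mem_closedBall, not_le] using hσ.1
        rw [dist_comm, dist_eq_norm] at this
        nlinarith [norm_nonneg (θ - σ)]
      calc c = (ε/2)^2 * δ := by ring
        _ ≤ (ε/2)^2 * (μ T).toReal := by nlinarith [sq_nonneg (ε/2)]
        _ ≤ ∫ σ in T, ‖θ - σ‖ ^ 2 ∂μ :=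
            setIntegral_ge_of_const_le_real hTmeas (measure_ne_top μ T) hlow ((hint θ).integrableOn)
        _ ≤ ∫ σ, ‖θ - σ‖ ^ 2 ∂μ :=
            setIntegral_le_integral (hint θ) (Filter.Eventually.of_forall fun σ => by positivity)
    -- outer integrability
    have hmeasF : StronglyMeasurable (fun θ : EuclideanSpace ℝ (Fin d) => ∫ σ, ‖θ - σ‖ ^ 2 ∂μ) := by
      apply StronglyMeasurable.integral_prod_right' (f := fun p : EuclideanSpace ℝ (Fin d) × EuclideanSpace ℝ (Fin d) => ‖p.1 - p.2‖ ^ 2)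
      exact Continuous.stronglyMeasurable (((continuous_fst.sub continuous_snd).norm).pow 2)
    have hFint : Integrable (fun θ => ∫ σ, ‖θ - σ‖ ^ 2 ∂μ) μ := by
      apply Integrable.mono' (integrable_const (4:ℝ)) hmeasF.aestronglyMeasurable
      filter_upwards [haeS] with θ hθ
      rw [Real.norm_eq_abs, abs_of_nonneg (integral_nonneg fun σ => by positivity)]
      calc ∫ σ, ‖θ - σ‖ ^ 2 ∂μ ≤ ∫ _σ, (4:ℝ) ∂μ := by
            apply integral_mono_ae (hint θ) (integrable_const 4)
            filter_upwards [haeS] with σ hσ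
            have h1 : ‖θ - σ‖ ≤ 2 := by
              calc ‖θ - σ‖ ≤ ‖θ‖ + ‖σ‖ := norm_sub_le θ σ
                _ ≤ 2 := by linarith [hnorm θ hθ, hnorm σ hσ]
            nlinarith [norm_nonneg (θ - σ)]
        _ = 4 := by simp
    have houter : c ≤ ∫ θ, ∫ σ, ‖θ - σ‖ ^ 2 ∂μ ∂μ := by
      calc c = ∫ _θ, c ∂μ := by simp
        _ ≤ _ := integral_mono (integrable_const c) hFint hinner
    calc (1/4 : ℝ) * δ * ε ^ (d + 1) ≤ 1/4 * δ * ε ^ 2 := by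
          have := pow_le_pow_of_le_one (le_of_lt hε0) (le_of_lt hε1) (by omega : 2 ≤ d + 1)
          nlinarith
      _ = c := by rw [hc]; ring
      _ ≤ _ := houter
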